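/- Let k ∈ ℕ, let A be an algorithm and let Ã = 𝔉_DaS(A) be its Delay-a-Step transformation. Suppose R̃ = ⟨F̃, H̃, Ĩ, Φ̃, T̃⟩ is a valid run of Ã using 𝒫_{k+1}. Define the initial configuration I of A by I|_i = delay_i(Ĩ|_i) for every process p_i; for each p_i let no-op(i) be the index of the first step of p_i in Φ̃, and obtain Φ and T' from Φ̃ and T̃ by deleting, for each p_i, the entries at index no-op(i). Then R' = ⟨F̃, H̃, I, Φ, T'⟩ is a valid run of A using 𝒫_{k+1}. -/

import Mathlib

namespace FDT

open Classical

/-- A failure pattern: a monotone assignment of crashed sets to times. -/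
structure FailurePattern (Proc : Type) where
  F : ℕ → Set Proc
  mono : ∀ t, F t ⊆ F (t + 1)

variable {Proc State Msg PState : Type}

/-- The set of processes live at time `t`. -/
def live (F : FailurePattern Proc) (t : ℕ) : Set Proc := (F.F t)ᶜ

/-- The set of correct processes: those that are always live. -/
def correctS (F : FailurePattern Proc) : Set Proc := {p | ∀ t, p ∉ F.F t}

/-- The set of faulty processes. -/
def faultyS (F : FailurePattern Proc) : Set Proc := (correctS F)ᶜ

/-- Marabout failure detector: every live process always sees exactly the faulty set. -/
def Marabout (F : FailurePattern Proc) : Set (Proc → ℕ → Set Proc) :=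
  {H | ∀ t : ℕ, ∀ p ∉ F.F t, H p t = faultyS F}

/-- The perfect failure detector: strong completeness and strong accuracy. -/
def Perfect (F : FailurePattern Proc) : Set (Proc → ℕ → Set Proc) :=
  {H | (∀ q ∈ faultyS F, ∀ p ∈ correctS F, ∃ t', ∀ t > t', q ∈ H p t) ∧
       (∀ t : ℕ, ∀ p ∉ F.F t, ∀ q, q ∉ F.F t → q ∉ H p t)}

/-- The failure detector `𝒫_k`: k-completeness and k-accuracy. -/
def Pk (k : ℕ) (F : FailurePattern Proc) : Set (Proc → ℕ → Set Proc) :=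
  {H | (∀ p q : Proc, q ∉ F.F k → q ∈ faultyS F → p ∈ correctS F →
          ∃ t', ∀ t > t', q ∈ H p t) ∧
       (∀ (p q : Proc) (t : ℕ), q ∉ F.F k → q ∉ F.F t → q ∉ H p t)}

/-- `F` is an initial crash scenario: all faulty processes crash at time 0. -/
def IsInitialCrashScenario (F : FailurePattern Proc) : Prop :=
  ∀ t, F.F t = faultyS F

/-- The initial crash scenario `F⁰` associated with `F`. -/
def initialScenario (F : FailurePattern Proc) : FailurePattern Proc :=
  ⟨fun _ => faultyS F, fun _ => subset_rfl⟩

/-- The shifted failure pattern `t ↦ F(t+1)`. -/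
def shiftPattern (F : FailurePattern Proc) : FailurePattern Proc :=
  ⟨fun t => F.F (t + 1), fun t => F.mono (t + 1)⟩

/-- A step `(p, s, m, d, s', m')` of process `p`. -/
structure Step (Proc State Msg : Type) where
  proc : Proc
  st : State
  recv : Option (Proc × Msg)
  fd : Set Proc
  st' : State
  send : Option (Proc × Msg)

/-- An algorithm: state sets, nonempty initial state sets, and a deterministic
transition relation given as the set of allowed steps. -/
structure Algorithm (Proc State Msg : Type) where
  Q : Proc → Set State
  init : Proc → Set State
  init_sub : ∀ p, init p ⊆ Q p
  init_nonempty : ∀ p, (init p).Nonempty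
  allowed : Set (Step Proc State Msg)
  allowed_st : ∀ s ∈ allowed, s.st ∈ Q s.proc ∧ s.st' ∈ Q s.proc
  det : ∀ s ∈ allowed, ∀ s' ∈ allowed,
    s.proc = s'.proc → s.st = s'.st → s.recv = s'.recv → s.fd = s'.fd →
    s.st' = s'.st' ∧ s.send = s'.send

/-- `R = ⟨F, H, I, Φ, T⟩` is a valid run of algorithm `A` using failure detector `D`. -/
def ValidRun (A : Algorithm Proc State Msg)
    (D : FailurePattern Proc → Set (Proc → ℕ → Set Proc))
    (F : FailurePattern Proc) (H : Proc → ℕ → Set Proc) (I : Proc → State)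
    (Φ : ℕ → Step Proc State Msg) (T : ℕ → ℕ) : Prop :=
  -- the time sequence is strictly increasing
  StrictMono T ∧
  -- the history belongs to the detector
  H ∈ D F ∧
  -- the initial configuration is made of initial states
  (∀ p, I p ∈ A.init p) ∧
  -- correct processes take infinitely many steps
  (∀ p ∈ correctS F, ∀ n : ℕ, ∃ ℓ ≥ n, (Φ ℓ).proc = p) ∧
  -- all steps are allowed by the algorithm
  (∀ ℓ, Φ ℓ ∈ A.allowed) ∧
  -- a process taking a step is live at that time
  (∀ ℓ, (Φ ℓ).proc ∉ F.F (T ℓ)) ∧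
  -- the failure detector output is the history value at that time
  (∀ ℓ, (Φ ℓ).fd = H (Φ ℓ).proc (T ℓ)) ∧
  -- no spurious messages
  (∀ ℓ q m, (Φ ℓ).recv = some (q, m) →
     ∃ k < ℓ, (Φ k).proc = q ∧ (Φ k).send = some ((Φ ℓ).proc, m)) ∧
  -- reliable links: each sent message received at most once; exactly once at correct processes
  (∀ ℓ q m, (Φ ℓ).send = some (q, m) →
     (∀ k k', ℓ < k → ℓ < k' → (Φ k).proc = q → (Φ k).recv = some ((Φ ℓ).proc, m) →
        (Φ k').proc = q → (Φ k').recv = some ((Φ ℓ).proc, m) → k = k') ∧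
     (q ∈ correctS F → ∃ k > ℓ, (Φ k).proc = q ∧ (Φ k).recv = some ((Φ ℓ).proc, m))) ∧
  -- the first step of a process starts in its initial state
  (∀ ℓ, (∀ k < ℓ, (Φ k).proc ≠ (Φ ℓ).proc) → (Φ ℓ).st = I (Φ ℓ).proc) ∧
  -- the state does not change between consecutive steps of a process
  (∀ ℓ k, ℓ < k → (Φ k).proc = (Φ ℓ).proc →
     (∀ j, ℓ < j → j < k → (Φ j).proc ≠ (Φ ℓ).proc) → (Φ k).st = (Φ ℓ).st')

/-- `γ(I,Φ,ℓ)`: the configuration (process states) after the first `ℓ` steps of `Φ`. -/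
noncomputable def configAt (I : Proc → State) (Φ : ℕ → Step Proc State Msg) :
    ℕ → Proc → State
  | 0 => I
  | (ℓ + 1) => fun p =>
      if (Φ ℓ).proc = p then (Φ ℓ).st' else configAt I Φ ℓ p

/-- `γ_i(I,Φ,ℓ)`: the state of process `p` after its first `ℓ` own steps in `Φ`
(constant once `p` takes no more steps). -/
noncomputable def procStateAfter (I : Proc → State) (Φ : ℕ → Step Proc State Msg)
    (p : Proc) : ℕ → State
  | 0 => I p
  | (ℓ + 1) =>
      if h : ∃ k, (Φ k).proc = p ∧ {j | j < k ∧ (Φ j).proc = p}.ncard = ℓ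
      then (Φ h.choose).st'
      else procStateAfter I Φ p ℓ

/-- `Φ, T` are obtained from `Φt, Tt` by deleting exactly the entries whose
process lies in `bad`. -/
def IsDeletion (bad : Set Proc) (Φt : ℕ → Step Proc State Msg) (Tt : ℕ → ℕ)
    (Φ : ℕ → Step Proc State Msg) (T : ℕ → ℕ) : Prop :=
  ∃ e : ℕ → ℕ, StrictMono e ∧
    (∀ ℓ, (Φt (e ℓ)).proc ∉ bad) ∧
    (∀ n, (Φt n).proc ∉ bad → ∃ ℓ, e ℓ = n) ∧
    (∀ ℓ, Φ ℓ = Φt (e ℓ)) ∧ (∀ ℓ, T ℓ = Tt (e ℓ))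

/-- Index `n` is the first step of its process in schedule `Φ`. -/
def IsFirstStep (Φ : ℕ → Step Proc State Msg) (n : ℕ) : Prop :=
  ∀ j < n, (Φ j).proc ≠ (Φ n).proc

/-- `Φ, T` are obtained from `Φt, Tt` by deleting, for each process, the entry of its
first step. -/
def IsFirstStepDeletion (Φt : ℕ → Step Proc State Msg) (Tt : ℕ → ℕ)
    (Φ : ℕ → Step Proc State Msg) (T : ℕ → ℕ) : Prop :=
  ∃ e : ℕ → ℕ, StrictMono e ∧
    (∀ ℓ, ¬ IsFirstStep Φt (e ℓ)) ∧
    (∀ n, ¬ IsFirstStep Φt n → ∃ ℓ, e ℓ = n) ∧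
    (∀ ℓ, Φ ℓ = Φt (e ℓ)) ∧ (∀ ℓ, T ℓ = Tt (e ℓ))

/-- Data for the Stall-on-Suspect transformation of `A`: the fresh stall states
`S†_i` (disjoint from `Q_i`) together with the bijections `stall_i : Q̂_i → S†_i`. -/
structure SoSData (A : Algorithm Proc State Msg) where
  Sd : Proc → Set State
  disj : ∀ p, Disjoint (Sd p) (A.Q p)
  stall : Proc → State → State
  stall_maps : ∀ p, ∀ q ∈ A.init p, stall p q ∈ Sd p
  stall_inj : ∀ p, Set.InjOn (stall p) (A.init p)
  stall_surj : ∀ p, Sd p ⊆ stall p '' (A.init p)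

/-- The Stall-on-Suspect transformation `Ã = 𝔉_SoS(A)`. -/
def SoSAlg (A : Algorithm Proc State Msg) (D : SoSData A) :
    Algorithm Proc State Msg where
  Q p := A.Q p ∪ D.Sd p
  init := A.init
  init_sub p := (A.init_sub p).trans Set.subset_union_left
  init_nonempty := A.init_nonempty
  allowed := {s | (s ∈ A.allowed ∧ ¬(s.st ∈ A.init s.proc ∧ s.proc ∈ s.fd)) ∨
      (s.st ∈ A.init s.proc ∧ s.proc ∈ s.fd ∧ s.st' = D.stall s.proc s.st ∧
        s.recv = none ∧ s.send = none) ∨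
      (s.st ∈ D.Sd s.proc ∧ s.st' = s.st ∧ s.recv = none ∧ s.send = none)}
  allowed_st := by
    rintro s (⟨hA, -⟩ | ⟨h1, h2, h3, -⟩ | ⟨h1, h2, -⟩)
    · exact ⟨Set.mem_union_left _ (A.allowed_st s hA).1,
        Set.mem_union_left _ (A.allowed_st s hA).2⟩
    · exact ⟨Set.mem_union_left _ (A.init_sub _ h1),
        Set.mem_union_right _ (h3 ▸ D.stall_maps _ _ h1)⟩
    · exact ⟨Set.mem_union_right _ h1, Set.mem_union_right _ (h2 ▸ h1)⟩
  det := by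
    rintro s hs s' hs' hproc hst hrecv hfd
    rcases hs with ⟨hA, hn⟩ | ⟨h1, h2, h3, h4, h5⟩ | ⟨h1, h2, h3, h4⟩ <;>
      rcases hs' with ⟨hA', hn'⟩ | ⟨h1', h2', h3', h4', h5'⟩ | ⟨h1', h2', h3', h4'⟩
    · exact A.det s hA s' hA' hproc hst hrecv hfd
    · exact absurd ⟨by rw [hproc, hst]; exact h1', by rw [hproc, hfd]; exact h2'⟩ hn
    · exact absurd ((A.allowed_st s hA).1)
        (Set.disjoint_left.mp (D.disj s.proc) (by rw [hproc, hst]; exact h1'))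
    · exact absurd ⟨by rw [← hproc, ← hst]; exact h1, by rw [← hproc, ← hfd]; exact h2⟩ hn'
    · refine ⟨?_, by rw [h5, h5']⟩
      rw [h3, h3', hproc, hst]
    · exact absurd (A.init_sub _ h1)
        (Set.disjoint_left.mp (D.disj s.proc) (by rw [hproc, hst]; exact h1'))
    · exact absurd ((A.allowed_st s' hA').1)
        (Set.disjoint_left.mp (D.disj s'.proc) (by rw [← hproc, ← hst]; exact h1))
    · exact absurd (A.init_sub _ h1')
        (Set.disjoint_left.mp (D.disj s'.proc) (by rw [← hproc, ← hst]; exact h1))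
    · exact ⟨by rw [h2, h2', hst], by rw [h4, h4']⟩

/-- Data for the Delay-a-Step transformation of `A`: fresh initial states `S⋆_i`
(disjoint from `Q_i`) together with the bijections `delay_i : S⋆_i → Q̂_i`. -/
structure DaSData (A : Algorithm Proc State Msg) where
  Ss : Proc → Set State
  disj : ∀ p, Disjoint (Ss p) (A.Q p)
  delay : Proc → State → State
  delay_maps : ∀ p, ∀ s ∈ Ss p, delay p s ∈ A.init p
  delay_inj : ∀ p, Set.InjOn (delay p) (Ss p)
  delay_surj : ∀ p, A.init p ⊆ delay p '' (Ss p)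

/-- The Delay-a-Step transformation `Ã = 𝔉_DaS(A)`. -/
def DaSAlg (A : Algorithm Proc State Msg) (D : DaSData A) :
    Algorithm Proc State Msg where
  Q p := A.Q p ∪ D.Ss p
  init p := D.Ss p
  init_sub p := Set.subset_union_right
  init_nonempty p := by
    obtain ⟨q, hq⟩ := A.init_nonempty p
    obtain ⟨s, hs, -⟩ := D.delay_surj p hq
    exact ⟨s, hs⟩
  allowed := {s | s ∈ A.allowed ∨
      (s.st ∈ D.Ss s.proc ∧ s.st' = D.delay s.proc s.st ∧
        s.recv = none ∧ s.send = none)}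
  allowed_st := by
    rintro s (hA | ⟨h1, h2, -⟩)
    · exact ⟨Set.mem_union_left _ (A.allowed_st s hA).1,
        Set.mem_union_left _ (A.allowed_st s hA).2⟩
    · exact ⟨Set.mem_union_right _ h1,
        Set.mem_union_left _ (A.init_sub _ (h2 ▸ D.delay_maps _ _ h1))⟩
  det := by
    rintro s hs s' hs' hproc hst hrecv hfd
    rcases hs with hA | ⟨h1, h2, h3, h4⟩ <;> rcases hs' with hA' | ⟨h1', h2', h3', h4'⟩
    · exact A.det s hA s' hA' hproc hst hrecv hfd
    · exact absurd ((A.allowed_st s hA).1)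
        (Set.disjoint_left.mp (D.disj s.proc) (by rw [hproc, hst]; exact h1'))
    · exact absurd ((A.allowed_st s' hA').1)
        (Set.disjoint_left.mp (D.disj s'.proc) (by rw [← hproc, ← hst]; exact h1))
    · exact ⟨by rw [h2, h2', hproc, hst], by rw [h4, h4']⟩

/-- One stuttering insertion: `w'` is obtained from `w` by inserting between the
`n`-th and `(n+1)`-st configurations a configuration agreeing componentwise with
one of the two. -/
def Stutter1 (w w' : ℕ → Proc → PState) : Prop :=
  ∃ n : ℕ, (∀ k ≤ n, w' k = w k) ∧
    (∀ p, w' (n + 1) p = w n p ∨ w' (n + 1) p = w (n + 1) p) ∧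
    (∀ k, n < k → w' (k + 1) = w k)

/-- `w ⊑ w'`: `w'` is obtained from `w` by finitely many stuttering insertions. -/
def Stutter (w w' : ℕ → Proc → PState) : Prop :=
  Relation.ReflTransGen Stutter1 w w'

/-- A time-free problem: a predicate on problem-configuration sequences and
failure patterns, satisfying crash time independence and finite stuttering. -/
structure TimeFreeProblem (Proc PState : Type) (initP : Set PState) where
  pred : (ℕ → Proc → PState) → FailurePattern Proc → Prop
  crashIndep : ∀ (w : ℕ → Proc → PState) (F F' : FailurePattern Proc),
    (∀ p, w 0 p ∈ initP) → correctS F = correctS F' → (pred w F ↔ pred w F')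
  stutterInv : ∀ (w w' : ℕ → Proc → PState) (F : FailurePattern Proc),
    (∀ p, w 0 p ∈ initP) → Stutter w w' → (pred w F ↔ pred w' F)

/-- `V` is an interpretation of the states of `A`: each `V_i` maps `Q_i` onto the
problem states, and `Q̂_i` onto the initial problem states `initP`. -/
def IsInterp (A : Algorithm Proc State Msg) (initP : Set PState)
    (V : Proc → State → PState) : Prop :=
  (∀ p, V p '' A.Q p = Set.univ) ∧ (∀ p, V p '' A.init p = initP)

/-- The interpreted run of a run with initial configuration `I` and schedule `Φ`. -/
noncomputable def interpRun (V : Proc → State → PState) (I : Proc → State)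
    (Φ : ℕ → Step Proc State Msg) : ℕ → Proc → PState :=
  fun ℓ p => V p (configAt I Φ ℓ p)

/-- Algorithm `A` solves problem `P` using failure detector `D`. -/
noncomputable def Solves (A : Algorithm Proc State Msg)
    (D : FailurePattern Proc → Set (Proc → ℕ → Set Proc))
    (P : (ℕ → Proc → PState) → FailurePattern Proc → Prop)
    (initP : Set PState) : Prop :=
  ∃ V : Proc → State → PState, IsInterp A initP V ∧
    ∀ (F : FailurePattern Proc) (H : Proc → ℕ → Set Proc) (I : Proc → State)
      (Φ : ℕ → Step Proc State Msg) (T : ℕ → ℕ),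
      ValidRun A D F H I Φ T → P (interpRun V I Φ) F

/-- Problem `P` is solvable using failure detector `D`. -/
noncomputable def SolvableWith (Proc : Type) {PState : Type}
    (D : FailurePattern Proc → Set (Proc → ℕ → Set Proc))
    (P : (ℕ → Proc → PState) → FailurePattern Proc → Prop)
    (initP : Set PState) : Prop :=
  ∃ (State Msg : Type) (A : Algorithm Proc State Msg), Solves A D P initP

/-- Problem states of strong consensus: an input value in `{0,1}` and a decision
in `{⊥,0,1}`. -/
abbrev SCState : Type := Bool × Option Bool

/-- Initial problem states of strong consensus: no decision yet. -/
def SCinit : Set SCState := {s | s.2 = none}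

/-- The strong-consensus predicate: inputs never change, decisions change at most
once and only from `⊥`, and all correct processes eventually forever decide the
input value of a single correct process (when a correct process exists). -/
def SCpred (w : ℕ → Proc → SCState) (F : FailurePattern Proc) : Prop :=
  (∀ (p : Proc) (ℓ : ℕ), (w ℓ p).1 = (w 0 p).1) ∧
  (∀ (p : Proc) (ℓ : ℕ), (w ℓ p).2 ≠ none → (w (ℓ + 1) p).2 = (w ℓ p).2) ∧
  ((correctS F).Nonempty →
    ∃ j ∈ correctS F, ∀ i ∈ correctS F, ∃ N, ∀ ℓ ≥ N, (w ℓ i).2 = some (w 0 j).1)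

/-- If `R̃ = ⟨F̃,H̃,Ĩ,Φ̃,T̃⟩` is a valid run of `Ã = 𝔉_DaS(A)` using
`𝒫_{k+1}`, `I` is defined by `I|_i = delay_i(Ĩ|_i)`, and `Φ, T'` are obtained from
`Φ̃, T̃` by deleting for each process the entry of its first (no-op) step, then
`R' = ⟨F̃,H̃,I,Φ,T'⟩` is a valid run of `A` using `𝒫_{k+1}`. -/
theorem delay_a_step_run_valid {Proc State Msg : Type} [Fintype Proc] [Nonempty Proc] (k : ℕ)
    (A : Algorithm Proc State Msg) (D : DaSData A)
    (Ft : FailurePattern Proc) (Ht : Proc → ℕ → Set Proc) (It : Proc → State)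
    (Φt : ℕ → Step Proc State Msg) (Tt : ℕ → ℕ)
    (hrun : ValidRun (DaSAlg A D) (Pk (k + 1)) Ft Ht It Φt Tt)
    (I : Proc → State) (hI : ∀ p, I p = D.delay p (It p))
    (Φ : ℕ → Step Proc State Msg) (T' : ℕ → ℕ)
    (hdel : IsFirstStepDeletion Φt Tt Φ T') :
    ValidRun A (Pk (k + 1)) Ft Ht I Φ T' := by
  classical
  obtain ⟨hT, hH, hInit, hInf, hAll, hLive, hFD, hNoSp, hRel, hFirst, hChain⟩ := hrun
  obtain ⟨e, heM, heNF, heS, heΦ, heT⟩ := hdel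
  have hItSs : ∀ p, It p ∈ D.Ss p := fun p => hInit p
  have hAll' : ∀ n, Φt n ∈ A.allowed ∨
      ((Φt n).st ∈ D.Ss (Φt n).proc ∧ (Φt n).st' = D.delay (Φt n).proc (Φt n).st ∧
        (Φt n).recv = none ∧ (Φt n).send = none) := fun n => hAll n
  -- L1: first steps are the no-op delay steps
  have L1 : ∀ n, IsFirstStep Φt n →
      (Φt n).st = It (Φt n).proc ∧
      (Φt n).st' = D.delay (Φt n).proc (It (Φt n).proc) ∧
      (Φt n).recv = none ∧ (Φt n).send = none := by
    intro n hn
    have hst : (Φt n).st = It (Φt n).proc := hFirst n hn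
    rcases hAll' n with h | h
    · have hmem : (Φt n).st ∈ D.Ss (Φt n).proc := hst ▸ hItSs _
      exact absurd ((A.allowed_st _ h).1) (Set.disjoint_left.mp (D.disj _) hmem)
    · exact ⟨hst, by rw [h.2.1, hst], h.2.2⟩
  -- L2: non-first steps are steps of A
  have L2 : ∀ n, ¬ IsFirstStep Φt n → Φt n ∈ A.allowed := by
    intro n hn
    have hex : ∃ j, j < n ∧ (Φt j).proc = (Φt n).proc := by
      unfold IsFirstStep at hn; push_neg at hn
      obtain ⟨j, hj1, hj2⟩ := hn; exact ⟨j, hj1, hj2⟩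
    obtain ⟨j0, hj0n, hj0p⟩ := hex
    have hn1 : 1 ≤ n := Nat.one_le_iff_ne_zero.mpr (by omega)
    set P : ℕ → Prop := fun j => (Φt j).proc = (Φt n).proc with hP
    set j := Nat.findGreatest P (n - 1) with hj
    have hjP : P j := Nat.findGreatest_spec (m := j0) (by omega) hj0p
    have hjlt : j < n := lt_of_le_of_lt (Nat.findGreatest_le _) (by omega)
    have hmax : ∀ m, j < m → m < n → ¬ P m := fun m h1 h2 =>
      Nat.findGreatest_is_greatest h1 (by omega)
    have hst : (Φt n).st = (Φt j).st' :=
      hChain j n hjlt hjP.symm (fun m h1 h2 hc => hmax m h1 h2 (hc.trans hjP))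
    have hstQ : (Φt n).st ∈ A.Q (Φt n).proc := by
      rw [hst, ← hjP]
      rcases hAll' j with h | h
      · exact (A.allowed_st _ h).2
      · rw [h.2.1]; exact A.init_sub _ (D.delay_maps _ _ h.1)
    rcases hAll' n with h | h
    · exact h
    · exact absurd hstQ (Set.disjoint_left.mp (D.disj _) h.1)
  refine ⟨?_, hH, ?_, ?_, ?_, ?_, ?_, ?_, ?_, ?_, ?_⟩
  · -- strict mono
    intro a b hab
    rw [heT, heT]
    exact hT (heM hab)
  · -- initial states
    intro p
    rw [hI p]
    exact D.delay_maps p (It p) (hItSs p)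
  · -- infinitely many steps
    intro p hp n
    obtain ⟨m1, hm1, hp1⟩ := hInf p hp (e n + 1)
    obtain ⟨m2, hm2, hp2⟩ := hInf p hp (m1 + 1)
    have hnf : ¬ IsFirstStep Φt m2 :=
      fun h => h m1 (by omega) (hp1.trans hp2.symm)
    obtain ⟨ℓ, hℓ⟩ := heS m2 hnf
    have h5 : e n < e ℓ := by omega
    exact ⟨ℓ, (heM.lt_iff_lt.mp h5).le, by rw [heΦ, hℓ]; exact hp2⟩
  · -- allowed
    intro ℓ; rw [heΦ]; exact L2 _ (heNF ℓ)
  · -- live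
    intro ℓ; rw [heΦ, heT]; exact hLive (e ℓ)
  · -- fd
    intro ℓ; rw [heΦ, heT]; exact hFD (e ℓ)
  · -- no spurious
    intro ℓ q m hm
    simp only [heΦ] at hm ⊢
    obtain ⟨j, hjlt, hjp, hjs⟩ := hNoSp (e ℓ) q m hm
    have hnf : ¬ IsFirstStep Φt j := fun h => by
      rw [(L1 j h).2.2.2] at hjs; exact nomatch hjs
    obtain ⟨ℓ', hℓ'⟩ := heS j hnf
    rw [← hℓ'] at hjlt hjp hjs
    exact ⟨ℓ', heM.lt_iff_lt.mp hjlt, hjp, hjs⟩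
  · -- reliable links
    intro ℓ q m hm
    simp only [heΦ] at hm ⊢
    obtain ⟨huniq, hexist⟩ := hRel (e ℓ) q m hm
    constructor
    · intro a b ha hb hpa hra hpb hrb
      exact heM.injective (huniq (e a) (e b) (heM ha) (heM hb) hpa hra hpb hrb)
    · intro hq
      obtain ⟨b, hb, hbp, hbr⟩ := hexist hq
      have hnf : ¬ IsFirstStep Φt b := fun h => by
        rw [(L1 b h).2.2.1] at hbr; exact nomatch hbr
      obtain ⟨ℓ', hℓ'⟩ := heS b hnf
      rw [← hℓ'] at hb hbp hbr
      exact ⟨ℓ', heM.lt_iff_lt.mp hb, hbp, hbr⟩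
  · -- first step starts in initial state
    intro ℓ hℓfirst
    rw [heΦ]
    set p := (Φt (e ℓ)).proc with hp
    have hnf := heNF ℓ
    have hex : ∃ j, j < e ℓ ∧ (Φt j).proc = p := by
      unfold IsFirstStep at hnf; push_neg at hnf
      obtain ⟨j, hj1, hj2⟩ := hnf; exact ⟨j, hj1, hj2⟩
    obtain ⟨j1, hj1lt, hj1p⟩ := hex
    have hexm : ∃ n, (Φt n).proc = p := ⟨j1, hj1p⟩
    set j0 := Nat.find hexm with hj0
    have hj0p : (Φt j0).proc = p := Nat.find_spec hexm
    have hj0first : IsFirstStep Φt j0 := fun i hi hc =>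
      Nat.find_min hexm hi (hc.trans hj0p)
    have hj0lt : j0 < e ℓ := lt_of_le_of_lt (Nat.find_min' hexm hj1p) hj1lt
    have hno : ∀ i, j0 < i → i < e ℓ → (Φt i).proc ≠ (Φt j0).proc := by
      intro i h1 h2 hc
      have hinf : ¬ IsFirstStep Φt i := fun h => h j0 h1 hc.symm
      obtain ⟨ℓ', hℓ'⟩ := heS i hinf
      have hlt : ℓ' < ℓ := heM.lt_iff_lt.mp (by rw [hℓ']; exact h2)
      exact hℓfirst ℓ' hlt (by rw [heΦ, heΦ, hℓ']; exact hc.trans hj0p)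
    have hst : (Φt (e ℓ)).st = (Φt j0).st' := hChain j0 (e ℓ) hj0lt hj0p.symm hno
    have hL1 := L1 j0 hj0first
    rw [hst, hL1.2.1, hj0p, hI]
  · -- chaining
    intro ℓ kk hlt hpk hno
    simp only [heΦ] at hpk ⊢
    refine hChain (e ℓ) (e kk) (heM hlt) hpk ?_
    intro i h1 h2 hc
    have hinf : ¬ IsFirstStep Φt i := fun h => h (e ℓ) h1 hc.symm
    obtain ⟨ℓ', hℓ'⟩ := heS i hinf
    rw [← hℓ'] at h1 h2 hc
    exact hno ℓ' (heM.lt_iff_lt.mp h1) (heM.lt_iff_lt.mp h2) (by rw [heΦ, heΦ]; exact hc)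

end FDT
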